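/- Define L_n(x) := (α_n/n) · |∑_{k=0}^n k e^{ikx}|² with α_n := 6/((n+1)(2n+1)). There is a constant C > 0 such that for all 0 < ε ≤ 1, all n with nε > 1, and all x with |sin(x/2)| ≥ ε, one has | L_n(x) − α_n n / (4 sin²(x/2)) | ≤ C/(n² ε³). -/

import Mathlib

open Real Complex Finset

noncomputable def Ln (n : ℕ) (x : ℝ) : ℝ :=
  (6 / ((n + 1) * (2 * n + 1)) / n) *
    ‖∑ k ∈ Finset.range (n + 1), (k : ℂ) * Complex.exp (k * x * Complex.I)‖ ^ 2

lemma aux_sum_id (z : ℂ) (n : ℕ) :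
    (1 - z) ^ 2 * ∑ k ∈ Finset.range (n + 1), (k : ℂ) * z ^ k
      = z * (1 - ((n : ℂ) + 1) * z ^ n + (n : ℂ) * z ^ (n + 1)) := by
  induction n with
  | zero => simp
  | succ m ih =>
    rw [Finset.sum_range_succ, mul_add, ih]
    push_cast
    ring

lemma aux_abs_one_sub_exp (x : ℝ) :
    ‖1 - Complex.exp (x * Complex.I)‖ = 2 * |Real.sin (x / 2)| := by
  have h1 : ‖1 - Complex.exp (x * Complex.I)‖ ^ 2 = (2 * |Real.sin (x / 2)|) ^ 2 := by
    rw [Complex.sq_norm, Complex.exp_mul_I]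
    simp [Complex.normSq_apply, Complex.cos_ofReal_re, Complex.sin_ofReal_re]
    have h := Real.sin_sq_eq_half_sub (x / 2)
    rw [show 2 * (x / 2) = x by ring] at h
    have h2 := Real.sin_sq_add_cos_sq x
    have h3 : |Real.sin (x / 2)| ^ 2 = Real.sin (x / 2) ^ 2 := sq_abs _
    nlinarith
  have h2 : (0:ℝ) ≤ ‖1 - Complex.exp (x * Complex.I)‖ := norm_nonneg _
  have h3 : (0:ℝ) ≤ 2 * |Real.sin (x / 2)| := by positivity
  nlinarith

lemma aux_habs (b N a : ℝ) (hb0 : 0 ≤ b) (hN : 0 ≤ N) (ha : 0 ≤ a)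
    (h1 : b ≤ N * a + 2) (h2 : N * a ≤ b + 2) :
    |b ^ 2 - N ^ 2 * a ^ 2| ≤ 4 * N * a + 12 := by
  rw [abs_le]
  constructor
  · nlinarith
  · nlinarith

lemma aux_key (N a ε : ℝ) (hN1 : 1 < N) (hε : 0 < ε) (hnε : 1 < N * ε)
    (haε : 2 * ε ≤ a) (ha0 : 0 < a) :
    6 / ((N + 1) * (2 * N + 1)) / N * (4 * N * a + 12) / a ^ 4 ≤ 4 / (N ^ 2 * ε ^ 3) := by
  have hN0 : 0 < N := by linarith
  have hcd : 6 / ((N + 1) * (2 * N + 1)) / N * (4 * N * a + 12) / a ^ 4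
      = 6 * (4 * N * a + 12) / (((N + 1) * (2 * N + 1) * N) * a ^ 4) := by
    have hNne : N ≠ 0 := ne_of_gt hN0
    have hane : a ≠ 0 := ne_of_gt ha0
    field_simp
  rw [hcd, div_le_div_iff₀ (by positivity) (by positivity)]
  have h8 : 8 * ε ^ 3 ≤ a ^ 3 := by
    calc 8 * ε ^ 3 = (2 * ε) ^ 3 := by ring
      _ ≤ a ^ 3 := by
          have h2ε : (0:ℝ) ≤ 2 * ε := by positivity
          exact pow_le_pow_left₀ h2ε haε 3
  have ha4 : 8 * ε ^ 3 * a ≤ a ^ 4 := by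
    calc 8 * ε ^ 3 * a ≤ a ^ 3 * a := mul_le_mul_of_nonneg_right h8 ha0.le
      _ = a ^ 4 := by ring
  have hD : 2 * N ^ 3 ≤ (N + 1) * (2 * N + 1) * N := by nlinarith
  have e1 : 64 * N ^ 3 * (ε ^ 3 * a) ≤ 4 * ((N + 1) * (2 * N + 1) * N * a ^ 4) := by
    nlinarith [mul_le_mul_of_nonneg_right hD (by positivity : (0:ℝ) ≤ a ^ 4),
      mul_le_mul_of_nonneg_left ha4 (by positivity : (0:ℝ) ≤ N ^ 3)]
  have e2 : 6 * (4 * N * a + 12) * (N ^ 2 * ε ^ 3) ≤ 64 * N ^ 3 * (ε ^ 3 * a) := by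
    nlinarith [mul_le_mul_of_nonneg_left haε (by positivity : (0:ℝ) ≤ N ^ 3 * ε ^ 3),
      mul_le_mul_of_nonneg_left (le_of_lt hnε) (by positivity : (0:ℝ) ≤ N ^ 2 * ε ^ 3)]
  linarith [e1, e2]

theorem Ln_estimate :
    ∃ C > 0, ∀ ε : ℝ, 0 < ε → ε ≤ 1 → ∀ n : ℕ, 1 < n * ε →
      ∀ x : ℝ, ε ≤ |Real.sin (x / 2)| →
        |Ln n x - (6 / ((n + 1) * (2 * n + 1))) * n / (4 * Real.sin (x / 2) ^ 2)|
          ≤ C / (n ^ 2 * ε ^ 3) := by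
  refine ⟨4, by norm_num, ?_⟩
  intro ε hε hε1 n hnε x hs
  set N : ℝ := (n : ℝ) with hNdef
  have hNn : (0:ℝ) ≤ N := Nat.cast_nonneg n
  have hN1 : 1 < N := lt_of_lt_of_le hnε (by nlinarith)
  have hN0 : 0 < N := by linarith
  set s := Real.sin (x / 2) with hsdef
  set z := Complex.exp ((x : ℂ) * Complex.I) with hzdef
  set a := ‖1 - z‖ with hadef
  have ha : a = 2 * |s| := aux_abs_one_sub_exp x
  have hsa : 0 < |s| := lt_of_lt_of_le hε hs
  have ha0 : 0 < a := by rw [ha]; linarith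
  have haε : 2 * ε ≤ a := by rw [ha]; linarith
  have hz1 : ‖z‖ = 1 := Complex.norm_exp_ofReal_mul_I x
  have tri : ∀ u v : ℂ, ‖u - v‖ ≤ ‖u‖ + ‖v‖ := fun u v => by
    exact norm_sub_le u v
  have hzn : ∀ m : ℕ, ‖1 - z ^ m‖ ≤ 2 := by
    intro m
    calc ‖1 - z ^ m‖ ≤ ‖(1:ℂ)‖ + ‖z ^ m‖ := tri _ _
      _ = 2 := by rw [norm_pow, hz1, norm_one]; norm_num
  have hz : (1 : ℂ) - z ≠ 0 := by
    intro h
    rw [hadef, h] at ha0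
    simp at ha0
  set S := ∑ k ∈ Finset.range (n + 1), (k : ℂ) * Complex.exp ((k : ℂ) * (x : ℂ) * Complex.I)
    with hSdef
  have hSz : S = ∑ k ∈ Finset.range (n + 1), (k : ℂ) * z ^ k := by
    refine Finset.sum_congr rfl fun k _ => ?_
    rw [mul_assoc, Complex.exp_nat_mul]
  set B : ℂ := 1 - ((n : ℂ) + 1) * z ^ n + (n : ℂ) * z ^ (n + 1) with hBdef
  have hSB : S = z * B / (1 - z) ^ 2 := by
    rw [eq_div_iff (pow_ne_zero 2 hz), hSz]
    linear_combination aux_sum_id z n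
  set b := ‖B‖ with hbdef
  have hb0 : 0 ≤ b := norm_nonneg _
  have habsS : ‖S‖ = b / a ^ 2 := by
    rw [hSB, norm_div, norm_mul, norm_pow, hzdef, Complex.norm_exp_ofReal_mul_I, one_mul]
  have haN : ‖(n : ℂ) * z ^ n * (1 - z)‖ = N * a := by
    rw [norm_mul, norm_mul, norm_pow, hz1, Complex.norm_natCast]
    ring
  have hb1 : b ≤ N * a + 2 := by
    have hBeq : B = (1 - z ^ n) - (n : ℂ) * z ^ n * (1 - z) := by rw [hBdef]; ring
    calc b ≤ ‖1 - z ^ n‖ + ‖(n : ℂ) * z ^ n * (1 - z)‖ := by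
          rw [hbdef, hBeq]; exact tri _ _
      _ ≤ 2 + N * a := by rw [haN]; linarith [hzn n]
      _ = N * a + 2 := by ring
  have hb2 : N * a ≤ b + 2 := by
    have hBeq : (n : ℂ) * z ^ n * (1 - z) = (1 - z ^ n) - B := by rw [hBdef]; ring
    calc N * a = ‖(n : ℂ) * z ^ n * (1 - z)‖ := haN.symm
      _ ≤ ‖1 - z ^ n‖ + ‖B‖ := by rw [hBeq]; exact tri _ _
      _ ≤ b + 2 := by rw [← hbdef]; linarith [hzn n]
  set c : ℝ := 6 / ((N + 1) * (2 * N + 1)) / N with hcdef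
  have hc0 : 0 ≤ c := by positivity
  have hLn : Ln n x = c * (b ^ 2 / a ^ 4) := by
    rw [Ln, ← hSdef, habsS, div_pow, ← pow_mul]
  have htarget : 6 / ((N + 1) * (2 * N + 1)) * N / (4 * s ^ 2) = c * (N ^ 2 * a ^ 2 / a ^ 4) := by
    have h4s : 4 * s ^ 2 = a ^ 2 := by
      rw [ha, mul_pow, _root_.sq_abs]; norm_num
    rw [h4s, hcdef]
    have hNne : N ≠ 0 := ne_of_gt hN0
    have hane : a ≠ 0 := ne_of_gt ha0
    field_simp
  have hdiff : Ln n x - 6 / ((N + 1) * (2 * N + 1)) * N / (4 * s ^ 2)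
      = c * (b ^ 2 - N ^ 2 * a ^ 2) / a ^ 4 := by
    rw [hLn, htarget]; ring
  have habs : |b ^ 2 - N ^ 2 * a ^ 2| ≤ 4 * N * a + 12 :=
    aux_habs b N a hb0 hNn ha0.le hb1 hb2
  have key : c * (4 * N * a + 12) / a ^ 4 ≤ 4 / (N ^ 2 * ε ^ 3) := by
    rw [hcdef]
    exact aux_key N a ε hN1 hε hnε haε ha0
  calc |Ln n x - 6 / ((N + 1) * (2 * N + 1)) * N / (4 * s ^ 2)|
      = c * |b ^ 2 - N ^ 2 * a ^ 2| / a ^ 4 := by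
        rw [hdiff, abs_div, abs_mul, _root_.abs_of_nonneg hc0,
          _root_.abs_of_nonneg (by positivity : (0:ℝ) ≤ a ^ 4)]
    _ ≤ c * (4 * N * a + 12) / a ^ 4 := by gcongr
    _ ≤ 4 / (N ^ 2 * ε ^ 3) := key
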